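/- Let μ be a k-homogeneous negatively associated probability distribution on 2^[n] whose support is the set of bases of a matroid, let n be an element with 0 < P[n ∈ S] < 1, and let Ω₀, Ω₁ be the states of M_μ not containing / containing n. Then there exists w : Ω₀ × Ω₁ → ℝ≥0 with w(x,y) > 0 only if P_μ(x,y) > 0 (i.e., |x △ y| = 2), Σ_{y∈Ω₁} w(x,y) = μ(x)/μ(Ω₀) for all x ∈ Ω₀, and Σ_{x∈Ω₀} w(x,y) = μ(y)/μ(Ω₁) for all y ∈ Ω₁. -/

import Mathlib

open Finset

def IsIndicator {n : ℕ} (f : Finset (Fin n) → ℝ) : Prop :=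
  ∀ S, f S = 0 ∨ f S = 1

def IsIncreasingFn {n : ℕ} (f : Finset (Fin n) → ℝ) : Prop :=
  ∀ S T, S ⊆ T → f S ≤ f T

def DependsOnCoords {n : ℕ} (f : Finset (Fin n) → ℝ) (D : Finset (Fin n)) : Prop :=
  ∀ S T, S ∩ D = T ∩ D → f S = f T

def NegAssoc {n : ℕ} (μ : Finset (Fin n) → ℝ) : Prop :=
  ∀ (f g : Finset (Fin n) → ℝ) (Df Dg : Finset (Fin n)),
    IsIndicator f → IsIndicator g → IsIncreasingFn f → IsIncreasingFn g →
    DependsOnCoords f Df → DependsOnCoords g Dg → Disjoint Df Dg →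
    (∑ S : Finset (Fin n), μ S * f S) * (∑ S : Finset (Fin n), μ S * g S) ≥
      ∑ S : Finset (Fin n), μ S * (f S * g S)


section Strassen

variable {α : Type*} [DecidableEq α] (R : α → α → Prop) [DecidableRel R] (Y : Finset α)

def nbr (A : Finset α) : Finset α := Y.filter (fun y => ∃ x ∈ A, R x y)

lemma nbr_subset (A : Finset α) : nbr R Y A ⊆ Y := filter_subset _ _

lemma nbr_mono {A B : Finset α} (h : A ⊆ B) : nbr R Y A ⊆ nbr R Y B := by
  intro y hy
  simp only [nbr, mem_filter] at *
  obtain ⟨hY, x, hx, hR⟩ := hy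
  exact ⟨hY, x, h hx, hR⟩

lemma nbr_empty : nbr R Y (∅ : Finset α) = ∅ := by simp [nbr]

lemma nbr_union (A B : Finset α) : nbr R Y (A ∪ B) = nbr R Y A ∪ nbr R Y B := by
  ext y
  simp only [nbr, mem_filter, mem_union]
  constructor
  · rintro ⟨hY, x, hx | hx, hR⟩
    exacts [Or.inl ⟨hY, x, hx, hR⟩, Or.inr ⟨hY, x, hx, hR⟩]
  · rintro (⟨hY, x, hx, hR⟩ | ⟨hY, x, hx, hR⟩)
    exacts [⟨hY, x, Or.inl hx, hR⟩, ⟨hY, x, Or.inr hx, hR⟩]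

def slk (p q : α → ℝ) (A : Finset α) : ℝ := ∑ y ∈ nbr R Y A, q y - ∑ x ∈ A, p x

lemma slk_union_le {q : α → ℝ} (hq : ∀ y ∈ Y, 0 ≤ q y) (p : α → ℝ) (A B : Finset α) :
    slk R Y p q (A ∪ B) + slk R Y p q (A ∩ B) ≤ slk R Y p q A + slk R Y p q B := by
  unfold slk
  have h1 : ∑ x ∈ A ∪ B, p x + ∑ x ∈ A ∩ B, p x = ∑ x ∈ A, p x + ∑ x ∈ B, p x :=
    Finset.sum_union_inter
  have h2 : ∑ y ∈ nbr R Y (A ∪ B), q y + ∑ y ∈ nbr R Y A ∩ nbr R Y B, q y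
      = ∑ y ∈ nbr R Y A, q y + ∑ y ∈ nbr R Y B, q y := by
    rw [nbr_union]; exact Finset.sum_union_inter
  have h3 : ∑ y ∈ nbr R Y (A ∩ B), q y ≤ ∑ y ∈ nbr R Y A ∩ nbr R Y B, q y := by
    apply Finset.sum_le_sum_of_subset_of_nonneg
    · intro y hy
      exact mem_inter.mpr ⟨nbr_mono R Y inter_subset_left hy, nbr_mono R Y inter_subset_right hy⟩
    · intro y hy _
      exact hq y ((mem_inter.mp hy).1 |> nbr_subset R Y A)
  linarith

lemma sum_update_mem {A : Finset α} (p : α → ℝ) {x₀ : α} (v : ℝ) (h : x₀ ∈ A) :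
    ∑ x ∈ A, Function.update p x₀ v x = ∑ x ∈ A, p x - p x₀ + v := by
  rw [Finset.sum_update_of_mem h]
  have h2 : ∑ x ∈ A.erase x₀, p x + p x₀ = ∑ x ∈ A, p x := Finset.sum_erase_add A p h
  rw [← Finset.erase_eq]
  linarith

lemma sum_update_not_mem {A : Finset α} (p : α → ℝ) {x₀ : α} (v : ℝ) (h : x₀ ∉ A) :
    ∑ x ∈ A, Function.update p x₀ v x = ∑ x ∈ A, p x :=
  Finset.sum_congr rfl fun x hx => Function.update_of_ne (by rintro rfl; exact h hx) _ _

end Strassen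

set_option linter.unusedSectionVars false

set_option maxHeartbeats 2000000 in
lemma strassen {α : Type*} [DecidableEq α] (R : α → α → Prop) [DecidableRel R]
    (X Y : Finset α) (M : ℕ) :
    ∀ p q : α → ℝ,
      (X.filter (fun x => 0 < p x)).card + (Y.filter (fun y => 0 < q y)).card +
        (X.powerset.filter (fun A => 0 < slk R Y p q A)).card ≤ M →
      (∀ x ∈ X, 0 ≤ p x) → (∀ y ∈ Y, 0 ≤ q y) →
      (∀ A ⊆ X, ∑ x ∈ A, p x ≤ ∑ y ∈ nbr R Y A, q y) →
      ∑ x ∈ X, p x = ∑ y ∈ Y, q y →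
      ∃ w : α → α → ℝ, (∀ x y, 0 ≤ w x y) ∧
        (∀ x y, 0 < w x y → x ∈ X ∧ y ∈ Y ∧ R x y) ∧
        (∀ x ∈ X, ∑ y ∈ Y, w x y = p x) ∧
        (∀ y ∈ Y, ∑ x ∈ X, w x y = q y) := by
  induction M with
  | zero =>
    intro p q hM hp hq hHall heq
    -- no positive p mass
    have hzero : ∀ x ∈ X, p x = 0 := by
      intro x hx
      by_contra h
      have hpos : 0 < p x := lt_of_le_of_ne (hp x hx) (Ne.symm h)
      have : x ∈ X.filter (fun x => 0 < p x) := mem_filter.mpr ⟨hx, hpos⟩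
      have : 0 < (X.filter (fun x => 0 < p x)).card := card_pos.mpr ⟨x, this⟩
      omega
    have hX0 : ∑ x ∈ X, p x = 0 := Finset.sum_eq_zero hzero
    have hY0 : ∀ y ∈ Y, q y = 0 := by
      have : ∑ y ∈ Y, q y = 0 := by rw [← heq, hX0]
      exact fun y hy => (Finset.sum_eq_zero_iff_of_nonneg hq).mp this y hy
    refine ⟨fun _ _ => 0, fun _ _ => le_refl 0, fun x y h => absurd h (lt_irrefl 0), ?_, ?_⟩
    · intro x hx; rw [Finset.sum_const_zero, hzero x hx]
    · intro y hy; rw [Finset.sum_const_zero, hY0 y hy]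
  | succ M ih =>
    intro p q hM hp hq hHall heq
    by_cases hex : ∃ x ∈ X, 0 < p x
    case neg =>
      -- same as base case
      have hzero : ∀ x ∈ X, p x = 0 := by
        intro x hx
        by_contra h
        exact hex ⟨x, hx, lt_of_le_of_ne (hp x hx) (Ne.symm h)⟩
      have hX0 : ∑ x ∈ X, p x = 0 := Finset.sum_eq_zero hzero
      have hY0 : ∀ y ∈ Y, q y = 0 := by
        have : ∑ y ∈ Y, q y = 0 := by rw [← heq, hX0]
        exact fun y hy => (Finset.sum_eq_zero_iff_of_nonneg hq).mp this y hy
      refine ⟨fun _ _ => 0, fun _ _ => le_refl 0, fun x y h => absurd h (lt_irrefl 0), ?_, ?_⟩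
      · intro x hx; rw [Finset.sum_const_zero, hzero x hx]
      · intro y hy; rw [Finset.sum_const_zero, hY0 y hy]
    case pos =>
    obtain ⟨x₀, hx₀X, hx₀p⟩ := hex
    -- the union of all "tight" sets avoiding x₀
    set T : Finset α :=
      ((X.powerset.filter (fun A => x₀ ∉ A ∧ slk R Y p q A ≤ 0)).sup id) with hT
    have hTprop : T ⊆ X ∧ slk R Y p q T ≤ 0 := by
      rw [hT]
      refine Finset.sup_induction (p := fun A => A ⊆ X ∧ slk R Y p q A ≤ 0) ?_ ?_ ?_
      · simp only [Finset.bot_eq_empty]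
        refine ⟨empty_subset X, ?_⟩
        simp [slk, nbr_empty]
      · rintro A ⟨hAX, hAs⟩ B ⟨hBX, hBs⟩
        simp only [Finset.sup_eq_union]
        refine ⟨union_subset hAX hBX, ?_⟩
        have hsub := slk_union_le R Y hq p A B
        have hint : 0 ≤ slk R Y p q (A ∩ B) := by
          have := hHall (A ∩ B) ((inter_subset_left).trans hAX)
          unfold slk; linarith
        linarith
      · intro A hA
        simp only [mem_filter, mem_powerset] at hA
        exact ⟨hA.1, hA.2.2⟩
    have hx₀T : x₀ ∉ T := by
      intro hmem
      rw [hT] at hmem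
      rw [Finset.mem_sup] at hmem
      obtain ⟨A, hA, hxA⟩ := hmem
      simp only [mem_filter, mem_powerset] at hA
      exact hA.2.1 hxA
    -- find y₀
    have hins : insert x₀ T ⊆ X := insert_subset hx₀X hTprop.1
    have hnsub : nbr R Y T ⊆ nbr R Y (insert x₀ T) := nbr_mono R Y (subset_insert _ _)
    have hsplit : ∑ y ∈ nbr R Y (insert x₀ T) \ nbr R Y T, q y + ∑ y ∈ nbr R Y T, q y
        = ∑ y ∈ nbr R Y (insert x₀ T), q y := Finset.sum_sdiff hnsub
    have hdiffpos : 0 < ∑ y ∈ nbr R Y (insert x₀ T) \ nbr R Y T, q y := by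
      have h1 := hHall (insert x₀ T) hins
      have h2 : ∑ x ∈ insert x₀ T, p x = p x₀ + ∑ x ∈ T, p x := Finset.sum_insert hx₀T
      have h3 : slk R Y p q T ≤ 0 := hTprop.2
      unfold slk at h3
      linarith
    obtain ⟨y₀, hy₀mem, hy₀q⟩ : ∃ y ∈ nbr R Y (insert x₀ T) \ nbr R Y T, 0 < q y := by
      by_contra h
      push_neg at h
      have : ∑ y ∈ nbr R Y (insert x₀ T) \ nbr R Y T, q y ≤ 0 :=
        Finset.sum_nonpos fun y hy => h y hy
      linarith
    have hy₀Y : y₀ ∈ Y := nbr_subset R Y _ ((mem_sdiff.mp hy₀mem).1)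
    have hy₀nT : y₀ ∉ nbr R Y T := (mem_sdiff.mp hy₀mem).2
    have hRx₀y₀ : R x₀ y₀ := by
      have h1 := (mem_sdiff.mp hy₀mem).1
      simp only [nbr, mem_filter, mem_insert] at h1
      obtain ⟨_, x, hx | hx, hR⟩ := h1
      · rwa [hx] at hR
      · exfalso
        apply hy₀nT
        simp only [nbr, mem_filter]
        exact ⟨hy₀Y, x, hx, hR⟩
    -- key: sets avoiding x₀ whose neighborhood contains y₀ have positive slack
    have hkey : ∀ A ⊆ X, x₀ ∉ A → y₀ ∈ nbr R Y A → 0 < slk R Y p q A := by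
      intro A hAX hx₀A hy₀A
      by_contra h
      push_neg at h
      have hAT : A ⊆ T := by
        rw [hT]
        exact Finset.le_sup (f := id)
          (mem_filter.mpr ⟨mem_powerset.mpr hAX, hx₀A, h⟩)
      exact hy₀nT (nbr_mono R Y hAT hy₀A)
    -- the step size ε
    set Scand : Finset (Finset α) :=
      X.powerset.filter (fun A => x₀ ∉ A ∧ y₀ ∈ nbr R Y A) with hScand
    set e₃ : ℝ := if h : Scand.Nonempty then Scand.inf' h (slk R Y p q) else p x₀ with he₃
    set ε : ℝ := min (min (p x₀) (q y₀)) e₃ with hε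
    have hScand_slk : ∀ A ∈ Scand, 0 < slk R Y p q A := by
      intro A hA
      simp only [hScand, mem_filter, mem_powerset] at hA
      exact hkey A hA.1 hA.2.1 hA.2.2
    have hεpos : 0 < ε := by
      rw [hε]
      apply lt_min (lt_min hx₀p hy₀q)
      rw [he₃]
      split
      case isTrue h =>
        obtain ⟨A, hA, hval⟩ := Finset.exists_mem_eq_inf' h (slk R Y p q)
        rw [hval]
        exact hScand_slk A hA
      case isFalse => exact hx₀p
    have hε_le_p : ε ≤ p x₀ := le_trans (min_le_left _ _) (min_le_left _ _)
    have hε_le_q : ε ≤ q y₀ := le_trans (min_le_left _ _) (min_le_right _ _)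
    have hε_le_slk : ∀ A ∈ Scand, ε ≤ slk R Y p q A := by
      intro A hA
      have h1 : ε ≤ e₃ := min_le_right _ _
      have hne : Scand.Nonempty := ⟨A, hA⟩
      rw [he₃, dif_pos hne] at h1
      exact le_trans h1 (Finset.inf'_le _ hA)
    -- the updated functions
    set p' : α → ℝ := Function.update p x₀ (p x₀ - ε) with hp'def
    set q' : α → ℝ := Function.update q y₀ (q y₀ - ε) with hq'def
    have hpA : ∀ A : Finset α, x₀ ∈ A → ∑ x ∈ A, p' x = ∑ x ∈ A, p x - ε := by
      intro A h; rw [hp'def, sum_update_mem p _ h]; ring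
    have hpA' : ∀ A : Finset α, x₀ ∉ A → ∑ x ∈ A, p' x = ∑ x ∈ A, p x := by
      intro A h; rw [hp'def, sum_update_not_mem p _ h]
    have hqA : ∀ B : Finset α, y₀ ∈ B → ∑ y ∈ B, q' y = ∑ y ∈ B, q y - ε := by
      intro B h; rw [hq'def, sum_update_mem q _ h]; ring
    have hqA' : ∀ B : Finset α, y₀ ∉ B → ∑ y ∈ B, q' y = ∑ y ∈ B, q y := by
      intro B h; rw [hq'def, sum_update_not_mem q _ h]
    have hy₀nbr : ∀ A : Finset α, x₀ ∈ A → y₀ ∈ nbr R Y A := by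
      intro A h
      simp only [nbr, mem_filter]
      exact ⟨hy₀Y, x₀, h, hRx₀y₀⟩
    -- new hypotheses
    have hp'nn : ∀ x ∈ X, 0 ≤ p' x := by
      intro x hx
      rw [hp'def]
      by_cases h : x = x₀
      · subst h; rw [Function.update_self]; linarith
      · rw [Function.update_of_ne h]; exact hp x hx
    have hq'nn : ∀ y ∈ Y, 0 ≤ q' y := by
      intro y hy
      rw [hq'def]
      by_cases h : y = y₀
      · subst h; rw [Function.update_self]; linarith
      · rw [Function.update_of_ne h]; exact hq y hy
    have hHall' : ∀ A ⊆ X, ∑ x ∈ A, p' x ≤ ∑ y ∈ nbr R Y A, q' y := by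
      intro A hAX
      by_cases hxA : x₀ ∈ A
      · rw [hpA A hxA, hqA _ (hy₀nbr A hxA)]
        linarith [hHall A hAX]
      · rw [hpA' A hxA]
        by_cases hyA : y₀ ∈ nbr R Y A
        · rw [hqA _ hyA]
          have : A ∈ Scand := mem_filter.mpr ⟨mem_powerset.mpr hAX, hxA, hyA⟩
          have := hε_le_slk A this
          unfold slk at this
          linarith
        · rw [hqA' _ hyA]
          exact hHall A hAX
    have heq' : ∑ x ∈ X, p' x = ∑ y ∈ Y, q' y := by
      rw [hpA X hx₀X, hqA Y hy₀Y, heq]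
    -- slack never increases
    have hslk_le : ∀ A ⊆ X, slk R Y p' q' A ≤ slk R Y p q A := by
      intro A hAX
      unfold slk
      by_cases hxA : x₀ ∈ A
      · rw [hpA A hxA, hqA _ (hy₀nbr A hxA)]; linarith
      · rw [hpA' A hxA]
        by_cases hyA : y₀ ∈ nbr R Y A
        · rw [hqA _ hyA]; linarith
        · rw [hqA' _ hyA]
    -- the three filters do not grow
    have hf1 : X.filter (fun x => 0 < p' x) ⊆ X.filter (fun x => 0 < p x) := by
      intro x hx
      rw [mem_filter] at *
      refine ⟨hx.1, ?_⟩
      have := hx.2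
      rw [hp'def] at this
      by_cases h : x = x₀
      · subst h; rw [Function.update_self] at this; linarith
      · rwa [Function.update_of_ne h] at this
    have hf2 : Y.filter (fun y => 0 < q' y) ⊆ Y.filter (fun y => 0 < q y) := by
      intro y hy
      rw [mem_filter] at *
      refine ⟨hy.1, ?_⟩
      have := hy.2
      rw [hq'def] at this
      by_cases h : y = y₀
      · subst h; rw [Function.update_self] at this; linarith
      · rwa [Function.update_of_ne h] at this
    have hf3 : X.powerset.filter (fun A => 0 < slk R Y p' q' A) ⊆
        X.powerset.filter (fun A => 0 < slk R Y p q A) := by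
      intro A hA
      rw [mem_filter] at *
      refine ⟨hA.1, lt_of_lt_of_le hA.2 (hslk_le A (mem_powerset.mp hA.1))⟩
    -- strict decrease in at least one filter
    have hstrict :
        (X.filter (fun x => 0 < p' x)).card + (Y.filter (fun y => 0 < q' y)).card +
          (X.powerset.filter (fun A => 0 < slk R Y p' q' A)).card ≤ M := by
      have hle1 := Finset.card_le_card hf1
      have hle2 := Finset.card_le_card hf2
      have hle3 := Finset.card_le_card hf3
      have hcases : ε = p x₀ ∨ ε = q y₀ ∨ (ε = e₃ ∧ Scand.Nonempty) := by
        rcases le_total (min (p x₀) (q y₀)) e₃ with h | h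
        · rw [hε, min_eq_left h]
          rcases le_total (p x₀) (q y₀) with h' | h'
          · left; exact min_eq_left h'
          · right; left; exact min_eq_right h'
        · by_cases hne : Scand.Nonempty
          · right; right; exact ⟨min_eq_right h, hne⟩
          · left
            rw [hε, min_eq_right h, he₃, dif_neg hne]
      rcases hcases with hc | hc | ⟨hc, hne⟩
      · -- p x₀ becomes zero
        have hs : X.filter (fun x => 0 < p' x) ⊂ X.filter (fun x => 0 < p x) := by
          rw [Finset.ssubset_iff_of_subset hf1]
          refine ⟨x₀, mem_filter.mpr ⟨hx₀X, hx₀p⟩, ?_⟩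
          intro hmem
          have := (mem_filter.mp hmem).2
          rw [hp'def, Function.update_self, hc] at this
          linarith
        have := Finset.card_lt_card hs
        omega
      · -- q y₀ becomes zero
        have hs : Y.filter (fun y => 0 < q' y) ⊂ Y.filter (fun y => 0 < q y) := by
          rw [Finset.ssubset_iff_of_subset hf2]
          refine ⟨y₀, mem_filter.mpr ⟨hy₀Y, hy₀q⟩, ?_⟩
          intro hmem
          have := (mem_filter.mp hmem).2
          rw [hq'def, Function.update_self, hc] at this
          linarith
        have := Finset.card_lt_card hs
        omega
      · -- some set becomes tight
        obtain ⟨A, hA, hval⟩ := Finset.exists_mem_eq_inf' hne (slk R Y p q)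
        have hAmem := hA
        simp only [hScand, mem_filter, mem_powerset] at hAmem
        have hslkA : slk R Y p q A = ε := by rw [hc, he₃, dif_pos hne, hval]
        have hslk'A : slk R Y p' q' A = 0 := by
          unfold slk
          rw [hpA' A hAmem.2.1, hqA _ hAmem.2.2]
          unfold slk at hslkA
          linarith
        have hs : X.powerset.filter (fun A => 0 < slk R Y p' q' A) ⊂
            X.powerset.filter (fun A => 0 < slk R Y p q A) := by
          rw [Finset.ssubset_iff_of_subset hf3]
          refine ⟨A, mem_filter.mpr ⟨mem_powerset.mpr hAmem.1, by rw [hslkA]; exact hεpos⟩, ?_⟩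
          intro hmem
          have := (mem_filter.mp hmem).2
          rw [hslk'A] at this
          linarith
        have := Finset.card_lt_card hs
        omega
    -- apply induction hypothesis
    obtain ⟨w', hw'nn, hw'supp, hw'row, hw'col⟩ := ih p' q' hstrict hp'nn hq'nn hHall' heq'
    refine ⟨fun x y => w' x y + (if x = x₀ then (if y = y₀ then ε else 0) else 0),
      ?_, ?_, ?_, ?_⟩
    · intro x y
      dsimp only
      have h0 : (0:ℝ) ≤ (if x = x₀ then (if y = y₀ then ε else 0) else 0) := by
        split
        · split
          · linarith
          · exact le_refl 0
        · exact le_refl 0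
      linarith [hw'nn x y]
    · intro x y hpos
      dsimp only at hpos
      by_cases h : 0 < w' x y
      · exact hw'supp x y h
      · push_neg at h
        have hiter : 0 < (if x = x₀ then (if y = y₀ then ε else 0) else 0) := by
          by_contra hcon
          push_neg at hcon
          linarith
        by_cases h1 : x = x₀
        · by_cases h2 : y = y₀
          · subst h1; subst h2; exact ⟨hx₀X, hy₀Y, hRx₀y₀⟩
          · rw [if_pos h1, if_neg h2] at hiter; linarith
        · rw [if_neg h1] at hiter; linarith
    · intro x hx
      dsimp only
      rw [Finset.sum_add_distrib, hw'row x hx]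
      by_cases h : x = x₀
      · have hs : ∑ y ∈ Y, (if x = x₀ then (if y = y₀ then ε else 0) else 0) = ε := by
          simp only [if_pos h]
          rw [Finset.sum_ite_eq' Y y₀ (fun _ => ε)]
          rw [if_pos hy₀Y]
        rw [hs, h, hp'def, Function.update_self]
        ring
      · have hs : ∑ y ∈ Y, (if x = x₀ then (if y = y₀ then ε else 0) else 0) = 0 := by
          simp [h]
        rw [hs, hp'def, Function.update_of_ne h]
        ring
    · intro y hy
      dsimp only
      rw [Finset.sum_add_distrib, hw'col y hy]
      by_cases h : y = y₀
      · have hs : ∑ x ∈ X, (if x = x₀ then (if y = y₀ then ε else 0) else 0) = ε := by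
          simp only [if_pos h]
          rw [Finset.sum_ite_eq' X x₀ (fun _ => ε)]
          rw [if_pos hx₀X]
        rw [hs, h, hq'def, Function.update_self]
        ring
      · have hs : ∑ x ∈ X, (if x = x₀ then (if y = y₀ then ε else 0) else 0) = 0 := by
          simp [h]
        rw [hs, hq'def, Function.update_of_ne h]
        ring

def BRel {n : ℕ} (y x : Finset (Fin n)) : Prop := (x \ y).card = 1 ∧ (y \ x).card = 1

instance {n : ℕ} : DecidableRel (BRel (n := n)) := fun _ _ => instDecidableAnd

lemma omega_split {n : ℕ} (μ : Finset (Fin n) → ℝ)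
    (hnn : ∀ S, 0 ≤ μ S) (hsum : ∑ S : Finset (Fin n), μ S = 1)
    (a : Fin n) (Ω₀ Ω₁ : Finset (Finset (Fin n)))
    (hΩ₀ : ∀ S, S ∈ Ω₀ ↔ 0 < μ S ∧ a ∉ S)
    (hΩ₁ : ∀ S, S ∈ Ω₁ ↔ 0 < μ S ∧ a ∈ S) :
    (∑ S ∈ Ω₀, μ S) + (∑ S ∈ Ω₁, μ S) = 1 := by
  have hdisj : Disjoint Ω₀ Ω₁ := by
    rw [Finset.disjoint_left]
    intro S h0 h1
    exact ((hΩ₀ S).mp h0).2 ((hΩ₁ S).mp h1).2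
  rw [← Finset.sum_union hdisj, ← hsum]
  apply Finset.sum_subset (subset_univ _)
  intro S _ hS
  rw [mem_union, hΩ₀, hΩ₁] at hS
  push_neg at hS
  by_cases h : a ∈ S
  · exact le_antisymm (not_lt.mp fun hp => (hS.2 hp) h) (hnn S)
  · exact le_antisymm (not_lt.mp fun hp => h (hS.1 hp)) (hnn S)

lemma hall_of_NA {n k : ℕ} (μ : Finset (Fin n) → ℝ)
    (hnn : ∀ S, 0 ≤ μ S) (hsum : ∑ S : Finset (Fin n), μ S = 1)
    (hhom : ∀ S, 0 < μ S → S.card = k) (hNA : NegAssoc μ)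
    (a : Fin n) (Ω₀ Ω₁ : Finset (Finset (Fin n)))
    (hΩ₀ : ∀ S, S ∈ Ω₀ ↔ 0 < μ S ∧ a ∉ S)
    (hΩ₁ : ∀ S, S ∈ Ω₁ ↔ 0 < μ S ∧ a ∈ S) :
    ∀ A ⊆ Ω₁, (∑ S ∈ A, μ S) * (∑ S ∈ Ω₀, μ S) ≤
      (∑ S ∈ nbr BRel Ω₀ A, μ S) * (∑ S ∈ Ω₁, μ S) := by
  intro A hA
  classical
  set f : Finset (Fin n) → ℝ := fun S => if ∃ y ∈ A, y.erase a ⊆ S then 1 else 0 with hf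
  set g : Finset (Fin n) → ℝ := fun S => if a ∈ S then 1 else 0 with hg
  -- membership in the support sets
  have hA_mem : ∀ y ∈ A, 0 < μ y ∧ a ∈ y := fun y hy => (hΩ₁ y).mp (hA hy)
  -- claim 1 : positive S containing a with f S positive witness lies in A
  have hclaim1 : ∀ S, 0 < μ S → a ∈ S → (∃ y ∈ A, y.erase a ⊆ S) → S ∈ A := by
    intro S hS haS ⟨y, hyA, hsub⟩
    obtain ⟨hyμ, hya⟩ := hA_mem y hyA
    have hysub : y ⊆ S := by
      intro i hi
      by_cases h : i = a
      · rwa [h]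
      · exact hsub (Finset.mem_erase.mpr ⟨h, hi⟩)
    have : y = S := Finset.eq_of_subset_of_card_le hysub
      (by rw [hhom S hS, hhom y hyμ])
    rwa [← this]
  -- claim 2 : positive S avoiding a with f S = 1 lies in nbr
  have hclaim2 : ∀ S, 0 < μ S → a ∉ S → (∃ y ∈ A, y.erase a ⊆ S) → S ∈ nbr BRel Ω₀ A := by
    intro S hS haS ⟨y, hyA, hsub⟩
    obtain ⟨hyμ, hya⟩ := hA_mem y hyA
    have hyS : y \ S = {a} := by
      apply Finset.Subset.antisymm
      · intro i hi
        rw [Finset.mem_sdiff] at hi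
        rw [Finset.mem_singleton]
        by_contra h
        exact hi.2 (hsub (Finset.mem_erase.mpr ⟨h, hi.1⟩))
      · intro i hi
        rw [Finset.mem_singleton] at hi
        subst hi
        exact Finset.mem_sdiff.mpr ⟨hya, haS⟩
    have hcards : S.card = y.card := by rw [hhom S hS, hhom y hyμ]
    have hSy : (S \ y).card = 1 := by
      rw [Finset.card_sdiff_comm hcards, hyS, Finset.card_singleton]
    simp only [nbr, mem_filter]
    refine ⟨(hΩ₀ S).mpr ⟨hS, haS⟩, y, hyA, hSy, by rw [hyS, Finset.card_singleton]⟩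
  -- the NA inequality
  have hind_f : IsIndicator f := by
    intro S; rw [hf]; dsimp only; split
    · right; rfl
    · left; rfl
  have hind_g : IsIndicator g := by
    intro S; rw [hg]; dsimp only; split
    · right; rfl
    · left; rfl
  have hmono_f : IsIncreasingFn f := by
    intro S T hST
    rw [hf]; dsimp only
    by_cases h : ∃ y ∈ A, y.erase a ⊆ S
    · obtain ⟨y, hy, hsub⟩ := h
      rw [if_pos ⟨y, hy, hsub⟩, if_pos ⟨y, hy, hsub.trans hST⟩]
    · rw [if_neg h]
      split
      · norm_num
      · norm_num
  have hmono_g : IsIncreasingFn g := by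
    intro S T hST
    rw [hg]; dsimp only
    by_cases h : a ∈ S
    · rw [if_pos h, if_pos (hST h)]
    · rw [if_neg h]; split <;> norm_num
  have hdep_f : DependsOnCoords f (univ.erase a) := by
    intro S T h
    rw [hf]; dsimp only
    have hiff : (∃ y ∈ A, y.erase a ⊆ S) ↔ (∃ y ∈ A, y.erase a ⊆ T) := by
      have hmem : ∀ i : Fin n, i ≠ a → (i ∈ S ↔ i ∈ T) := by
        intro i hi
        have h1 : i ∈ S ↔ i ∈ S ∩ univ.erase a := by
          simp [Finset.mem_erase, hi]
        have h2 : i ∈ T ↔ i ∈ T ∩ univ.erase a := by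
          simp [Finset.mem_erase, hi]
        rw [h1, h2, h]
      constructor
      · rintro ⟨y, hy, hsub⟩
        exact ⟨y, hy, fun i hi => (hmem i (Finset.mem_erase.mp hi).1).mp (hsub hi)⟩
      · rintro ⟨y, hy, hsub⟩
        exact ⟨y, hy, fun i hi => (hmem i (Finset.mem_erase.mp hi).1).mpr (hsub hi)⟩
    exact if_congr hiff rfl rfl
  have hdep_g : DependsOnCoords g ({a} : Finset (Fin n)) := by
    intro S T h
    rw [hg]; dsimp only
    have : a ∈ S ↔ a ∈ T := by
      have h1 : a ∈ S ↔ a ∈ S ∩ {a} := by simp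
      have h2 : a ∈ T ↔ a ∈ T ∩ {a} := by simp
      rw [h1, h2, h]
    exact if_congr this rfl rfl
  have hdisj : Disjoint (univ.erase a) ({a} : Finset (Fin n)) := by
    simp
  have hNAineq := hNA f g (univ.erase a) {a} hind_f hind_g hmono_f hmono_g hdep_f hdep_g hdisj
  -- compute the three expectations
  have hEg : ∑ S : Finset (Fin n), μ S * g S = ∑ S ∈ Ω₁, μ S := by
    rw [eq_comm]
    apply Finset.sum_subset_zero_on_sdiff (subset_univ _)
    · intro S hS
      rw [mem_sdiff, hΩ₁] at hS
      push_neg at hS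
      rw [hg]; dsimp only
      by_cases h : a ∈ S
      · rw [if_pos h, mul_one]
        exact le_antisymm (not_lt.mp fun hp => (hS.2 hp) h) (hnn S)
      · rw [if_neg h, mul_zero]
    · intro S hS
      rw [hΩ₁] at hS
      rw [hg]; dsimp only
      rw [if_pos hS.2, mul_one]
  have hEfg : ∑ S : Finset (Fin n), μ S * (f S * g S) = ∑ S ∈ A, μ S := by
    rw [eq_comm]
    apply Finset.sum_subset_zero_on_sdiff (subset_univ _)
    · intro S hS
      rw [mem_sdiff] at hS
      by_cases hμ : 0 < μ S
      · by_cases hga : a ∈ S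
        · by_cases hfe : ∃ y ∈ A, y.erase a ⊆ S
          · exact absurd (hclaim1 S hμ hga hfe) hS.2
          · rw [hf]; dsimp only; rw [if_neg hfe]; ring
        · rw [hg]; dsimp only; rw [if_neg hga]; ring
      · have : μ S = 0 := le_antisymm (not_lt.mp hμ) (hnn S)
        rw [this]; ring
    · intro S hS
      have h1 := hA_mem S hS
      rw [hf, hg]; dsimp only
      rw [if_pos ⟨S, hS, Finset.erase_subset a S⟩, if_pos h1.2]
      ring
  have hEf_le : ∑ S : Finset (Fin n), μ S * f S ≤ ∑ S ∈ A, μ S + ∑ S ∈ nbr BRel Ω₀ A, μ S := by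
    have h1 : ∑ S : Finset (Fin n), μ S * f S = ∑ S ∈ A ∪ nbr BRel Ω₀ A, μ S * f S := by
      rw [eq_comm]
      apply Finset.sum_subset_zero_on_sdiff (subset_univ _) _ (fun _ _ => rfl)
      intro S hS
      rw [mem_sdiff, mem_union] at hS
      push_neg at hS
      by_cases hμ : 0 < μ S
      · by_cases hfe : ∃ y ∈ A, y.erase a ⊆ S
        · by_cases hga : a ∈ S
          · exact absurd (hclaim1 S hμ hga hfe) hS.2.1
          · exact absurd (hclaim2 S hμ hga hfe) hS.2.2
        · rw [hf]; dsimp only; rw [if_neg hfe, mul_zero]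
      · have : μ S = 0 := le_antisymm (not_lt.mp hμ) (hnn S)
        rw [this, zero_mul]
    have h2 : ∑ S ∈ A ∪ nbr BRel Ω₀ A, μ S * f S ≤ ∑ S ∈ A ∪ nbr BRel Ω₀ A, μ S := by
      apply Finset.sum_le_sum
      intro S _
      rcases hind_f S with h | h
      · rw [h, mul_zero]; exact hnn S
      · rw [h, mul_one]
    have h3 : ∑ S ∈ A ∪ nbr BRel Ω₀ A, μ S ≤ ∑ S ∈ A, μ S + ∑ S ∈ nbr BRel Ω₀ A, μ S := by
      rw [← Finset.sum_union_inter]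
      have : 0 ≤ ∑ S ∈ A ∩ nbr BRel Ω₀ A, μ S := Finset.sum_nonneg fun S _ => hnn S
      linarith
    linarith
  -- put it together
  have hm01 := omega_split μ hnn hsum a Ω₀ Ω₁ hΩ₀ hΩ₁
  set m₀ : ℝ := ∑ S ∈ Ω₀, μ S with hm₀
  set m₁ : ℝ := ∑ S ∈ Ω₁, μ S with hm₁
  set μA : ℝ := ∑ S ∈ A, μ S with hμA
  set μN : ℝ := ∑ S ∈ nbr BRel Ω₀ A, μ S with hμN
  have hμA_nn : 0 ≤ μA := Finset.sum_nonneg fun S _ => hnn S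
  have hm₁_nn : 0 ≤ m₁ := Finset.sum_nonneg fun S _ => hnn S
  have hμN_nn : 0 ≤ μN := Finset.sum_nonneg fun S _ => hnn S
  rw [hEg, hEfg] at hNAineq
  -- hNAineq : (∑ μ f) * m₁ ≥ μA
  have hkey : μA ≤ (μA + μN) * m₁ := by
    calc μA ≤ (∑ S : Finset (Fin n), μ S * f S) * m₁ := hNAineq
    _ ≤ (μA + μN) * m₁ := by
        apply mul_le_mul_of_nonneg_right hEf_le hm₁_nn
  nlinarith [hkey, hμA_nn, hm₁_nn]

/-- Fractional perfect matching between the two fibers of the basis-exchange chain. -/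
theorem fractional_matching_of_negAssoc {n k : ℕ} (μ : Finset (Fin n) → ℝ)
    (hnn : ∀ S, 0 ≤ μ S) (hsum : ∑ S : Finset (Fin n), μ S = 1)
    (hhom : ∀ S, 0 < μ S → S.card = k) (hNA : NegAssoc μ)
    (hexch : ∀ S T : Finset (Fin n), 0 < μ S → 0 < μ T → ∀ i ∈ S \ T,
      ∃ j ∈ T \ S, 0 < μ (insert j (S.erase i)))
    (a : Fin n)
    (Ω₀ Ω₁ : Finset (Finset (Fin n)))
    (hΩ₀ : ∀ S, S ∈ Ω₀ ↔ 0 < μ S ∧ a ∉ S)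
    (hΩ₁ : ∀ S, S ∈ Ω₁ ↔ 0 < μ S ∧ a ∈ S)
    (hmarg₀ : 0 < ∑ S ∈ Ω₀, μ S) (hmarg₁ : 0 < ∑ S ∈ Ω₁, μ S) :
    ∃ w : Finset (Fin n) → Finset (Fin n) → ℝ,
      (∀ x y, 0 ≤ w x y) ∧
      (∀ x y, 0 < w x y →
        x ∈ Ω₀ ∧ y ∈ Ω₁ ∧ (x \ y).card = 1 ∧ (y \ x).card = 1) ∧
      (∀ x ∈ Ω₀, ∑ y ∈ Ω₁, w x y = μ x / (∑ S ∈ Ω₀, μ S)) ∧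
      (∀ y ∈ Ω₁, ∑ x ∈ Ω₀, w x y = μ y / (∑ S ∈ Ω₁, μ S)) := by
  classical
  set m₀ : ℝ := ∑ S ∈ Ω₀, μ S with hm₀
  set m₁ : ℝ := ∑ S ∈ Ω₁, μ S with hm₁
  set p : Finset (Fin n) → ℝ := fun S => μ S / m₁ with hpdef
  set q : Finset (Fin n) → ℝ := fun S => μ S / m₀ with hqdef
  have hp : ∀ y ∈ Ω₁, 0 ≤ p y := fun y _ => div_nonneg (hnn y) (le_of_lt hmarg₁)
  have hq : ∀ x ∈ Ω₀, 0 ≤ q x := fun x _ => div_nonneg (hnn x) (le_of_lt hmarg₀)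
  have hHall : ∀ A ⊆ Ω₁, ∑ y ∈ A, p y ≤ ∑ x ∈ nbr BRel Ω₀ A, q x := by
    intro A hA
    rw [hpdef, hqdef]
    dsimp only
    rw [← Finset.sum_div, ← Finset.sum_div]
    rw [div_le_div_iff₀ hmarg₁ hmarg₀]
    exact hall_of_NA μ hnn hsum hhom hNA a Ω₀ Ω₁ hΩ₀ hΩ₁ A hA
  have heq : ∑ y ∈ Ω₁, p y = ∑ x ∈ Ω₀, q x := by
    rw [hpdef, hqdef]
    dsimp only
    rw [← Finset.sum_div, ← Finset.sum_div, ← hm₀, ← hm₁,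
      div_self (ne_of_gt hmarg₁), div_self (ne_of_gt hmarg₀)]
  obtain ⟨w', hw'nn, hw'supp, hw'row, hw'col⟩ :=
    strassen BRel Ω₁ Ω₀
      ((Ω₁.filter (fun x => 0 < p x)).card + (Ω₀.filter (fun y => 0 < q y)).card +
        (Ω₁.powerset.filter (fun A => 0 < slk BRel Ω₀ p q A)).card)
      p q (le_refl _) hp hq hHall heq
  refine ⟨fun x y => w' y x, fun x y => hw'nn y x, ?_, ?_, ?_⟩
  · intro x y hpos
    obtain ⟨h1, h2, h3⟩ := hw'supp y x hpos
    exact ⟨h2, h1, h3.1, h3.2⟩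
  · intro x hx
    rw [hw'col x hx]
  · intro y hy
    rw [hw'row y hy]
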